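/- The topological complexity of the circle S¹ is exactly 2: there exist two open sets U₁ = {(a,b) ∈ S¹ × S¹ : a ≠ −b} and U₂ = {(a,b) ∈ S¹ × S¹ : a ≠ b} covering S¹ × S¹, each admitting a continuous local section of the path fibration, and no single continuous global section exists since S¹ is not contractible. -/

import Mathlib

open unitInterval

/-- A continuous local motion-planning section over `U ⊆ X × X`. -/
def IsMotionSection {X : Type*} [TopologicalSpace X] (U : Set (X × X)) : Prop :=
  ∃ s : C(U, C(I, X)), ∀ p : U, s p 0 = (p : X × X).1 ∧ s p 1 = (p : X × X).2

/-- `X × X` can be covered by `k` open sets, each admitting a continuous local section. -/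
def HasTCCover (X : Type*) [TopologicalSpace X] (k : ℕ) : Prop :=
  ∃ U : Fin k → Set (X × X), (∀ i, IsOpen (U i)) ∧ (⋃ i, U i) = Set.univ ∧
    ∀ i, IsMotionSection (U i)

/-- Farber's topological complexity (unreduced; `⊤` if no finite cover works). -/
noncomputable def topologicalComplexity (X : Type*) [TopologicalSpace X] : ℕ∞ :=
  sInf ((↑) '' {k : ℕ | 1 ≤ k ∧ HasTCCover X k})

section Aux

open Complex unitInterval Real


lemma re_pos_of_abs (z : ℂ) (h1 : ‖z‖ = 1) (h2 : ‖z - 1‖ < 1) : 0 < z.re := by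
  have e1 : z.re^2 + z.im^2 = 1 := by
    have := Complex.sq_norm z
    rw [h1, Complex.normSq_apply] at this; nlinarith [this]
  have e2 : (z.re - 1)^2 + z.im^2 < 1 := by
    have h2' : (‖z-1‖)^2 < 1 := by nlinarith [norm_nonneg (z-1)]
    have := Complex.sq_norm (z-1)
    rw [Complex.normSq_apply] at this
    simp only [Complex.sub_re, Complex.sub_im, Complex.one_re, Complex.one_im, sub_zero] at this
    nlinarith [this]
  nlinarith

lemma coord_bound (c c' : ℝ) (t : I) : |c * (t:ℝ) - c' * t| ≤ |c - c'| := by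
  rw [show c * (t:ℝ) - c' * t = (c - c') * t by ring, abs_mul]
  calc |c - c'| * |(t:ℝ)| ≤ |c - c'| * 1 := by
        apply mul_le_mul_of_nonneg_left _ (abs_nonneg _)
        rw [_root_.abs_of_nonneg t.2.1]; exact t.2.2
    _ = |c - c'| := mul_one _

/-- scaling of a point of `I × I` -/
noncomputable def scl (c : ℝ) (hc : c ∈ I) (x : I × I) : I × I :=
  (⟨c, hc⟩ * x.1, ⟨c, hc⟩ * x.2)

lemma continuous_scl (c : ℝ) (hc : c ∈ I) : Continuous (scl c hc) := by
  apply Continuous.prodMk <;>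
  · apply Continuous.subtype_mk
    fun_prop

lemma dist_scl (c c' : ℝ) (hc : c ∈ I) (hc' : c' ∈ I) (x : I × I) :
    dist (scl c hc x) (scl c' hc' x) ≤ |c - c'| := by
  rcases x with ⟨u, t⟩
  rw [Prod.dist_eq]
  apply max_le <;> rw [Subtype.dist_eq, Real.dist_eq]
  · exact coord_bound c c' u
  · exact coord_bound c c' t

lemma exists_lift (G : I × I → ℂ) (hG : Continuous G) (habs : ∀ x, ‖G x‖ = 1) :
    ∃ L : I × I → ℝ, Continuous L ∧ ∀ x, G x = Complex.exp (L x * Complex.I) := by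
  have hUC : UniformContinuous G := CompactSpace.uniformContinuous_of_continuous hG
  obtain ⟨δ, hδ, hδ'⟩ := Metric.uniformContinuous_iff.mp hUC 1 one_pos
  obtain ⟨n, hn⟩ := exists_nat_one_div_lt hδ
  set N : ℕ := n + 1 with hN
  have hNpos : (0:ℝ) < N := by positivity
  set c : ℕ → ℝ := fun k => min ((k:ℝ) / N) 1 with hc
  have hcmem : ∀ k, c k ∈ I := fun k => ⟨le_min (by positivity) zero_le_one, min_le_right _ _⟩
  have hc0 : c 0 = 0 := by simp [hc]
  have hcN : c N = 1 := by
    simp only [hc]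
    rw [div_self (ne_of_gt hNpos)]; simp
  have hcd : ∀ k, |c (k+1) - c k| ≤ 1 / N := by
    intro k
    have h1 : c k ≤ c (k+1) := by
      apply min_le_min _ le_rfl
      gcongr
      push_cast; linarith
    rw [_root_.abs_of_nonneg (by linarith)]
    rcases min_cases ((k:ℝ)/N) 1 with ⟨h2, h3⟩ | ⟨h2, h3⟩
    · have h2' : c k = (k:ℝ)/N := h2
      have h4 : c (k+1) ≤ (k:ℝ)/N + 1/N := by
        apply min_le_of_left_le
        push_cast; rw [add_div]
      linarith
    · have h2' : c k = 1 := h2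
      have h4 : c (k+1) = 1 := by
        apply min_eq_right
        calc (1:ℝ) ≤ (k:ℝ)/N := le_of_lt h3
          _ ≤ ((k:ℕ)+1:ℕ)/N := by gcongr; push_cast; linarith
      rw [h4, h2']
      simp only [sub_self]
      positivity
  -- the scaled maps
  set g : ℕ → I × I → ℂ := fun k x => G (scl (c k) (hcmem k) x) with hg
  have hgcont : ∀ k, Continuous (g k) := fun k => hG.comp (continuous_scl _ _)
  have hgabs : ∀ k x, ‖g k x‖ = 1 := fun k x => habs _
  have hgne : ∀ k x, g k x ≠ 0 := by
    intro k x h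
    have := hgabs k x
    rw [h] at this; simp at this
  have hclose : ∀ k x, ‖g (k+1) x - g k x‖ < 1 := by
    intro k x
    have hd : dist (scl (c (k+1)) (hcmem (k+1)) x) (scl (c k) (hcmem k) x) < δ := by
      calc dist _ _ ≤ |c (k+1) - c k| := dist_scl _ _ _ _ x
        _ ≤ 1 / N := hcd k
        _ < δ := by push_cast [hN]; exact_mod_cast hn
    have := hδ' hd
    rwa [Complex.dist_eq] at this
  -- ratios
  set r : ℕ → I × I → ℂ := fun k x => g (k+1) x / g k x with hr
  have hrabs : ∀ k x, ‖r k x‖ = 1 := by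
    intro k x; simp [hr, norm_div, hgabs]
  have hrre : ∀ k x, 0 < (r k x).re := by
    intro k x
    apply re_pos_of_abs _ (hrabs k x)
    have : r k x - 1 = (g (k+1) x - g k x) / g k x := div_sub_one (hgne k x)
    rw [this, norm_div, hgabs]
    simpa using hclose k x
  set a : ℕ → I × I → ℝ := fun k x => Complex.arg (r k x) with ha
  have hacont : ∀ k, Continuous (a k) := by
    intro k
    rw [continuous_iff_continuousAt]
    intro x
    exact (Complex.continuousAt_arg (Complex.mem_slitPlane_iff.2 (Or.inl (hrre k x)))).comp
      (((hgcont (k+1)).div (hgcont k) (fun y => hgne k y)).continuousAt)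
  have haexp : ∀ k x, Complex.exp (a k x * Complex.I) = r k x := by
    intro k x
    have := Complex.norm_mul_exp_arg_mul_I (r k x)
    rwa [hrabs k x, Complex.ofReal_one, one_mul] at this
  -- the partial sums
  set L : ℕ → I × I → ℝ := fun m x => Complex.arg (g 0 x) + ∑ k ∈ Finset.range m, a k x with hL
  have hLexp : ∀ m x, Complex.exp (L m x * Complex.I) = g m x := by
    intro m
    induction m with
    | zero =>
      intro x
      simp only [hL, Finset.range_zero, Finset.sum_empty, add_zero]
      have := Complex.norm_mul_exp_arg_mul_I (g 0 x)
      rwa [hgabs 0 x, Complex.ofReal_one, one_mul] at this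
    | succ m ih =>
      intro x
      have hstep : L (m+1) x = L m x + a m x := by
        simp only [hL, Finset.sum_range_succ]; ring
      rw [hstep]
      push_cast
      rw [add_mul, Complex.exp_add, ih x, haexp m x]
      show g m x * (g (m+1) x / g m x) = g (m+1) x
      rw [← mul_div_assoc]
      exact mul_div_cancel_left₀ (g (m+1) x) (hgne m x)
  have hmul0 : ∀ t : I, (⟨c 0, hcmem 0⟩ * t : I) = 0 := by
    intro t
    apply Subtype.ext
    show c 0 * (t:ℝ) = 0
    rw [hc0, zero_mul]
  have hmul1 : ∀ t : I, (⟨c N, hcmem N⟩ * t : I) = t := by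
    intro t
    apply Subtype.ext
    show c N * (t:ℝ) = t
    rw [hcN, one_mul]
  have hL0 : ∀ x, g 0 x = G ((0:I), (0:I)) := by
    intro x
    show G _ = _
    congr 1
    exact Prod.ext (hmul0 x.1) (hmul0 x.2)
  refine ⟨L N, ?_, ?_⟩
  · apply Continuous.add
    · have : (fun x => Complex.arg (g 0 x)) = fun _ => Complex.arg (G ((0:I),(0:I))) := by
        funext x; rw [hL0 x]
      rw [this]; exact continuous_const
    · exact continuous_finset_sum _ (fun k _ => hacont k)
  · intro x
    rw [hLexp N x]
    show G x = G _
    congr 1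
    exact (Prod.ext (hmul1 x.1) (hmul1 x.2)).symm


lemma int_mul_const_of_continuous {f : I → ℝ} (hf : Continuous f)
    (h : ∀ x, ∃ n : ℤ, f x = n * (2 * π)) (x y : I) : f x = f y := by
  have key : ∀ u v : I, ¬ (f u < f v) := by
    intro u v huv
    obtain ⟨a, ha⟩ := h u
    obtain ⟨b, hb⟩ := h v
    have hab : (a:ℝ) < b := by
      by_contra hc
      push_neg at hc
      have : (b:ℝ) * (2*π) ≤ a * (2*π) := by
        apply mul_le_mul_of_nonneg_right hc (by positivity)
      rw [← ha, ← hb] at this; linarith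
    have hab' : (a:ℝ) + 1 ≤ b := by exact_mod_cast (by exact_mod_cast hab : a < b)
    have himg : IsPreconnected (f '' Set.univ) :=
      (isPreconnected_univ).image f hf.continuousOn
    have hv : (a:ℝ) * (2*π) + π ∈ Set.Icc (f u) (f v) := by
      constructor
      · rw [ha]; linarith [Real.pi_pos]
      · rw [hb]; nlinarith [Real.pi_pos]
    have hsub := himg.Icc_subset ⟨u, Set.mem_univ u, rfl⟩ ⟨v, Set.mem_univ v, rfl⟩
    obtain ⟨z, -, hz⟩ := hsub hv
    obtain ⟨m, hm⟩ := h z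
    rw [hm] at hz
    have : ((2*(m - a) : ℤ) : ℝ) = 1 := by
      push_cast
      have hpi := Real.pi_ne_zero
      have : ((m:ℝ) - a) * (2*π) = π := by linarith [hz]
      nlinarith [this]
    have : (2*(m-a) : ℤ) = 1 := by exact_mod_cast this
    omega
  exact le_antisymm (not_lt.1 (key y x)) (not_lt.1 (key x y))

lemma exp_eq_exp_real {x y : ℝ} (h : Complex.exp (x * Complex.I) = Complex.exp (y * Complex.I)) :
    ∃ n : ℤ, x - y = n * (2 * π) := by
  rw [Complex.exp_eq_exp_iff_exists_int] at h
  obtain ⟨n, hn⟩ := h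
  refine ⟨n, ?_⟩
  have : ((x - y : ℝ) : ℂ) * Complex.I = ((n * (2*π) : ℝ) : ℂ) * Complex.I := by
    push_cast
    push_cast at hn
    ring_nf
    ring_nf at hn
    linear_combination hn
  have h2 := mul_right_cancel₀ Complex.I_ne_zero this
  exact_mod_cast h2

lemma not_contractible_sphere : ¬ ContractibleSpace (Metric.sphere (0:ℂ) 1) := by
  intro hcon
  obtain ⟨y, ⟨H⟩⟩ := (contractible_iff_id_nullhomotopic _).mp hcon
  have hmem : ∀ u : ℝ, Complex.exp ((2*π*u : ℝ) * Complex.I) ∈ Metric.sphere (0:ℂ) 1 := by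
    intro u
    rw [mem_sphere_zero_iff_norm]
    exact Complex.norm_exp_ofReal_mul_I _
  set e : I → Metric.sphere (0:ℂ) 1 :=
    fun u => ⟨Complex.exp ((2*π*(u:ℝ) : ℝ) * Complex.I), hmem _⟩ with he'
  have he : Continuous e := by
    apply Continuous.subtype_mk
    fun_prop
  have he01 : e 0 = e 1 := by
    apply Subtype.ext
    show Complex.exp _ = Complex.exp _
    rw [show ((2*π*((0:I):ℝ) : ℝ):ℂ) = 0 by push_cast [show ((0:I):ℝ) = 0 from rfl]; ring]
    rw [show ((2*π*((1:I):ℝ) : ℝ):ℂ) * Complex.I = 2*π*Complex.I by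
      push_cast [show ((1:I):ℝ) = 1 from rfl]; ring]
    rw [zero_mul, Complex.exp_zero, Complex.exp_two_pi_mul_I]
  set G : I × I → ℂ := fun q => ((H (q.2, e q.1) : Metric.sphere (0:ℂ) 1) : ℂ) with hG'
  have hGc : Continuous G := by
    apply continuous_subtype_val.comp
    exact H.continuous.comp ((continuous_snd).prodMk (he.comp continuous_fst))
  have hGabs : ∀ x, ‖G x‖ = 1 := by
    intro x
    have := (H (x.2, e x.1)).2
    rwa [mem_sphere_zero_iff_norm] at this
  obtain ⟨L, hLc, hLe⟩ := exists_lift G hGc hGabs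
  -- three auxiliary functions
  have hF1 : ∀ t : I, ∃ n : ℤ, (L (1, t) - L (0, t)) = n * (2*π) := by
    intro t
    apply exp_eq_exp_real
    rw [← hLe (1, t), ← hLe (0, t)]
    show ((H (t, e 1) : Metric.sphere (0:ℂ) 1) : ℂ) = ((H (t, e 0) : _) : ℂ)
    rw [he01]
  have hF2 : ∀ u : I, ∃ n : ℤ, (L (u, 1) - L (0, 1)) = n * (2*π) := by
    intro u
    apply exp_eq_exp_real
    rw [← hLe (u, 1), ← hLe (0, 1)]
    show ((H (1, e u) : Metric.sphere (0:ℂ) 1) : ℂ) = ((H (1, e 0) : _) : ℂ)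
    rw [H.apply_one, H.apply_one]
    rfl
  have hG0 : ∀ u : I, G (u, 0) = Complex.exp ((2*π*(u:ℝ) : ℝ) * Complex.I) := by
    intro u
    show ((H (0, e u) : Metric.sphere (0:ℂ) 1) : ℂ) = _
    rw [H.apply_zero]
    rfl
  have hF3 : ∀ u : I, ∃ n : ℤ, (L (u, 0) - 2*π*(u:ℝ)) = n * (2*π) := by
    intro u
    apply exp_eq_exp_real
    rw [← hLe (u, 0), hG0 u]
  -- constancy
  have hc1 : Continuous (fun t : I => L (1, t) - L (0, t)) := by fun_prop
  have hc2 : Continuous (fun u : I => L (u, 1) - L (0, 1)) := by fun_prop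
  have hc3 : Continuous (fun u : I => L (u, 0) - 2*π*(u:ℝ)) := by fun_prop
  have e1 := int_mul_const_of_continuous hc1 hF1 0 1
  have e2 := int_mul_const_of_continuous hc2 hF2 0 1
  have e3 := int_mul_const_of_continuous hc3 hF3 0 1
  simp only [show ((0:I):ℝ) = 0 from rfl, show ((1:I):ℝ) = 1 from rfl] at e1 e2 e3
  have hpi := Real.pi_pos
  linarith



lemma abs_of_sphere (a : Metric.sphere (0:ℂ) 1) : ‖(a : ℂ)‖ = 1 := by
  have := a.2
  rwa [mem_sphere_zero_iff_norm] at this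

lemma ne_zero_of_sphere (a : Metric.sphere (0:ℂ) 1) : (a : ℂ) ≠ 0 := by
  intro h
  have := abs_of_sphere a
  rw [h] at this; simp at this

lemma slit_of_ne_neg_one (z : ℂ) (h1 : ‖z‖ = 1) (h2 : z ≠ -1) : z ∈ Complex.slitPlane := by
  rw [Complex.mem_slitPlane_iff]
  by_contra hc
  push_neg at hc
  obtain ⟨hre, him⟩ := hc
  apply h2
  have e1 : z.re^2 + z.im^2 = 1 := by
    have := Complex.sq_norm z
    rw [h1, Complex.normSq_apply] at this
    nlinarith [this]
  rw [him] at e1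
  have : z.re = -1 := by nlinarith
  apply Complex.ext <;> simp [this, him]

/-- A section exists over `U` whenever there is a continuous choice of angle `θ` with
`exp (θ p * I) = p.2 / p.1`. -/
lemma section_of_theta {U : Set (Metric.sphere (0:ℂ) 1 × Metric.sphere (0:ℂ) 1)}
    (θ : U → ℝ) (hθc : Continuous θ)
    (hθ : ∀ p : U, Complex.exp (θ p * Complex.I) =
      (p.1.2 : ℂ) / (p.1.1 : ℂ)) : IsMotionSection U := by
  have hmem : ∀ (p : U) (t : I),
      (p.1.1 : ℂ) * Complex.exp (((t:ℝ) * θ p : ℝ) * Complex.I) ∈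
        Metric.sphere (0:ℂ) 1 := by
    intro p t
    rw [mem_sphere_zero_iff_norm, norm_mul, abs_of_sphere,
      Complex.norm_exp_ofReal_mul_I, one_mul]
  set F : U × I → Metric.sphere (0:ℂ) 1 :=
    fun q => ⟨_, hmem q.1 q.2⟩ with hF
  have hFc : Continuous F := by
    apply Continuous.subtype_mk
    apply Continuous.mul
    · fun_prop
    · apply Complex.continuous_exp.comp
      apply Continuous.mul _ continuous_const
      apply Complex.continuous_ofReal.comp
      exact (continuous_subtype_val.comp continuous_snd).mul (hθc.comp continuous_fst)
  refine ⟨(ContinuousMap.mk F hFc).curry, ?_⟩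
  intro p
  constructor
  · apply Subtype.ext
    show (p.1.1 : ℂ) * Complex.exp ((((0:I):ℝ) * θ p : ℝ) * Complex.I) = _
    rw [show (((0:I):ℝ) : ℝ) = 0 from rfl]
    push_cast
    rw [zero_mul, zero_mul, Complex.exp_zero, mul_one]
  · apply Subtype.ext
    show (p.1.1 : ℂ) * Complex.exp ((((1:I):ℝ) * θ p : ℝ) * Complex.I) = _
    rw [show (((1:I):ℝ) : ℝ) = 1 from rfl]
    push_cast
    rw [one_mul, hθ p]
    rw [mul_div_cancel₀ _ (ne_zero_of_sphere p.1.1)]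

lemma section_U1 : IsMotionSection {p : Metric.sphere (0 : ℂ) 1 × Metric.sphere (0 : ℂ) 1 |
    (p.1 : ℂ) ≠ -(p.2 : ℂ)} := by
  set U := {p : Metric.sphere (0 : ℂ) 1 × Metric.sphere (0 : ℂ) 1 | (p.1 : ℂ) ≠ -(p.2 : ℂ)}
  have habs : ∀ p : U, ‖(p.1.2 : ℂ) / (p.1.1 : ℂ)‖ = 1 := by
    intro p
    rw [norm_div, abs_of_sphere, abs_of_sphere, div_one]
  have hne : ∀ p : U, (p.1.2 : ℂ) / (p.1.1 : ℂ) ≠ -1 := by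
    intro p h
    rw [div_eq_iff (ne_zero_of_sphere _)] at h
    apply p.2
    show (p.1.1 : ℂ) = -(p.1.2 : ℂ)
    rw [h]; ring
  apply section_of_theta (fun p => Complex.arg ((p.1.2 : ℂ) / (p.1.1 : ℂ)))
  · rw [continuous_iff_continuousAt]
    intro p
    have hd : ContinuousAt (fun p : U => (p.1.2 : ℂ) / (p.1.1 : ℂ)) p :=
      ContinuousAt.div (by fun_prop) (by fun_prop) (ne_zero_of_sphere _)
    exact ContinuousAt.comp (g := Complex.arg)
      (Complex.continuousAt_arg (slit_of_ne_neg_one _ (habs p) (hne p))) hd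
  · intro p
    have := Complex.norm_mul_exp_arg_mul_I ((p.1.2 : ℂ) / (p.1.1 : ℂ))
    rwa [habs p, Complex.ofReal_one, one_mul] at this

lemma section_U2 : IsMotionSection {p : Metric.sphere (0 : ℂ) 1 × Metric.sphere (0 : ℂ) 1 |
    (p.1 : ℂ) ≠ (p.2 : ℂ)} := by
  set U := {p : Metric.sphere (0 : ℂ) 1 × Metric.sphere (0 : ℂ) 1 | (p.1 : ℂ) ≠ (p.2 : ℂ)}
  have habs : ∀ p : U, ‖-(p.1.2 : ℂ) / (p.1.1 : ℂ)‖ = 1 := by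
    intro p
    rw [norm_div, norm_neg, abs_of_sphere, abs_of_sphere, div_one]
  have hne : ∀ p : U, -(p.1.2 : ℂ) / (p.1.1 : ℂ) ≠ -1 := by
    intro p h
    rw [div_eq_iff (ne_zero_of_sphere _)] at h
    apply p.2
    show (p.1.1 : ℂ) = (p.1.2 : ℂ)
    linear_combination h
  apply section_of_theta (fun p => π + Complex.arg (-(p.1.2 : ℂ) / (p.1.1 : ℂ)))
  · apply continuous_const.add
    rw [continuous_iff_continuousAt]
    intro p
    have hd : ContinuousAt (fun p : U => -(p.1.2 : ℂ) / (p.1.1 : ℂ)) p :=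
      ContinuousAt.div (by fun_prop) (by fun_prop) (ne_zero_of_sphere _)
    exact ContinuousAt.comp (g := Complex.arg)
      (Complex.continuousAt_arg (slit_of_ne_neg_one _ (habs p) (hne p))) hd
  · intro p
    have h1 := Complex.norm_mul_exp_arg_mul_I (-(p.1.2 : ℂ) / (p.1.1 : ℂ))
    rw [habs p, Complex.ofReal_one, one_mul] at h1
    push_cast
    rw [add_mul, Complex.exp_add, h1, Complex.exp_pi_mul_I]
    field_simp



open Complex Real in
lemma contractible_of_univ_section {X : Type*} [TopologicalSpace X] [Nonempty X]
    (h : IsMotionSection (Set.univ : Set (X × X))) : ContractibleSpace X := by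
  obtain ⟨s, hs⟩ := h
  obtain ⟨c⟩ := ‹Nonempty X›
  rw [contractible_iff_id_nullhomotopic]
  refine ⟨c, ⟨?_⟩⟩
  have h1 : Continuous fun q : I × X => ((s ⟨(q.2, c), Set.mem_univ _⟩ : C(I, X)), q.1) := by
    apply Continuous.prodMk _ continuous_fst
    exact s.continuous.comp (Continuous.subtype_mk (continuous_snd.prodMk continuous_const) _)
  exact
    { toFun := ContinuousMap.mk (fun q : I × X => s ⟨(q.2, c), Set.mem_univ _⟩ q.1)
        (continuous_eval.comp h1)
      map_zero_left := fun x => (hs ⟨(x, c), Set.mem_univ _⟩).1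
      map_one_left := fun x => (hs ⟨(x, c), Set.mem_univ _⟩).2 }

open Complex Real in
lemma cover_eq_univ :
    {p : Metric.sphere (0 : ℂ) 1 × Metric.sphere (0 : ℂ) 1 | (p.1 : ℂ) ≠ -(p.2 : ℂ)} ∪
      {p : Metric.sphere (0 : ℂ) 1 × Metric.sphere (0 : ℂ) 1 | (p.1 : ℂ) ≠ (p.2 : ℂ)} =
      Set.univ := by
  apply Set.eq_univ_iff_forall.2
  intro p
  by_contra hc
  simp only [Set.mem_union, Set.mem_setOf_eq] at hc
  push_neg at hc
  obtain ⟨h1, h2⟩ := hc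
  have : (p.2 : ℂ) = 0 := by
    have := h1.symm.trans h2
    linear_combination -this / 2
  exact ne_zero_of_sphere p.2 this

open Complex Real in
lemma isOpen_U1 : IsOpen {p : Metric.sphere (0 : ℂ) 1 × Metric.sphere (0 : ℂ) 1 |
    (p.1 : ℂ) ≠ -(p.2 : ℂ)} := by
  have h : IsClosed {p : Metric.sphere (0 : ℂ) 1 × Metric.sphere (0 : ℂ) 1 |
      (p.1 : ℂ) = -(p.2 : ℂ)} := isClosed_eq (by fun_prop) (by fun_prop)
  exact h.isOpen_compl

open Complex Real in
lemma isOpen_U2 : IsOpen {p : Metric.sphere (0 : ℂ) 1 × Metric.sphere (0 : ℂ) 1 |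
    (p.1 : ℂ) ≠ (p.2 : ℂ)} := by
  have h : IsClosed {p : Metric.sphere (0 : ℂ) 1 × Metric.sphere (0 : ℂ) 1 |
      (p.1 : ℂ) = (p.2 : ℂ)} := isClosed_eq (by fun_prop) (by fun_prop)
  exact h.isOpen_compl

instance : Nonempty (Metric.sphere (0 : ℂ) 1) :=
  ⟨⟨1, by rw [mem_sphere_zero_iff_norm]; simp⟩⟩

open Complex Real in
lemma not_univ_section :
    ¬ IsMotionSection (Set.univ : Set (Metric.sphere (0:ℂ) 1 × Metric.sphere (0:ℂ) 1)) :=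
  fun h => not_contractible_sphere (contractible_of_univ_section h)

open Complex Real in
lemma hasTCCover_two : HasTCCover (Metric.sphere (0 : ℂ) 1) 2 := by
  refine ⟨fun i => if i = 0 then
    {p : Metric.sphere (0 : ℂ) 1 × Metric.sphere (0 : ℂ) 1 | (p.1 : ℂ) ≠ -(p.2 : ℂ)} else
    {p : Metric.sphere (0 : ℂ) 1 × Metric.sphere (0 : ℂ) 1 | (p.1 : ℂ) ≠ (p.2 : ℂ)},
    ?_, ?_, ?_⟩
  · intro i
    by_cases hi : i = 0 <;> simp [hi, isOpen_U1, isOpen_U2]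
  · apply Set.eq_univ_iff_forall.2
    intro p
    have := Set.eq_univ_iff_forall.1 cover_eq_univ p
    rcases this with h | h
    · exact Set.mem_iUnion.2 ⟨0, by simpa using h⟩
    · exact Set.mem_iUnion.2 ⟨1, by simpa using h⟩
  · intro i
    by_cases hi : i = 0 <;> simp only [hi, if_pos, if_neg, reduceIte]
    · exact section_U1
    · exact section_U2

end Aux

theorem tc_circle_eq_two :
    topologicalComplexity (Metric.sphere (0 : ℂ) 1) = 2 ∧
    IsOpen {p : Metric.sphere (0 : ℂ) 1 × Metric.sphere (0 : ℂ) 1 |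
      (p.1 : ℂ) ≠ -(p.2 : ℂ)} ∧
    IsOpen {p : Metric.sphere (0 : ℂ) 1 × Metric.sphere (0 : ℂ) 1 |
      (p.1 : ℂ) ≠ (p.2 : ℂ)} ∧
    {p : Metric.sphere (0 : ℂ) 1 × Metric.sphere (0 : ℂ) 1 | (p.1 : ℂ) ≠ -(p.2 : ℂ)} ∪
      {p : Metric.sphere (0 : ℂ) 1 × Metric.sphere (0 : ℂ) 1 | (p.1 : ℂ) ≠ (p.2 : ℂ)} =
      Set.univ ∧
    IsMotionSection {p : Metric.sphere (0 : ℂ) 1 × Metric.sphere (0 : ℂ) 1 |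
      (p.1 : ℂ) ≠ -(p.2 : ℂ)} ∧
    IsMotionSection {p : Metric.sphere (0 : ℂ) 1 × Metric.sphere (0 : ℂ) 1 |
      (p.1 : ℂ) ≠ (p.2 : ℂ)} ∧
    ¬ IsMotionSection (Set.univ : Set (Metric.sphere (0 : ℂ) 1 × Metric.sphere (0 : ℂ) 1)) ∧
    ¬ ContractibleSpace (Metric.sphere (0 : ℂ) 1) := by
  refine ⟨?_, isOpen_U1, isOpen_U2, cover_eq_univ, section_U1, section_U2,
    not_univ_section, not_contractible_sphere⟩
  apply le_antisymm
  · exact sInf_le ⟨2, ⟨by norm_num, hasTCCover_two⟩, rfl⟩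
  · apply le_sInf
    rintro b ⟨k, ⟨hk1, hkc⟩, rfl⟩
    have hk : k ≠ 1 := by
      rintro rfl
      obtain ⟨U, hopen, hcov, hsec⟩ := hkc
      have hU0 : U 0 = Set.univ := by
        apply Set.eq_univ_iff_forall.2
        intro x
        have := Set.eq_univ_iff_forall.1 hcov x
        obtain ⟨i, hi⟩ := Set.mem_iUnion.1 this
        rwa [Subsingleton.elim i 0] at hi
      exact not_univ_section (hU0 ▸ hsec 0)
    have h2 : 2 ≤ k := by omega
    exact_mod_cast h2
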